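/- Let G = (V, E) be a finite graph with |V| ≥ 4, let ε be a real with 0 < ε ≤ 1/|V|^5, and set δ̄ = 4/|V|^3. Suppose σ1, σ2 ∈ Δ(V) satisfy: (a) for every v ∈ V, (1 − p_v) · |V|/(|V|−2) ≤ 1 + 2ε, where p_v = 1 − (1 − σ1(v))(1 − σ2(v)); and (b) for every edge e = {v1, v2} ∈ E, (1 − σ1(v1) − σ1(v2)) · |V|/(|V|−2) ≤ 1 + 2ε. Then the set S = {v ∈ V : σ1(v) ≥ 2/|V| − 2ε − δ̄} has at most |V|/2 elements and contains at least one endpoint of every edge of G; in particular, G has a vertex cover of size at most |V|/2. -/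

import Mathlib

open Finset

noncomputable section

/-- A probability distribution on a finite type, given as a weight function. -/
def IsDist {X : Type*} [Fintype X] (σ : X → ℝ) : Prop :=
  (∀ x, 0 ≤ σ x) ∧ ∑ x, σ x = 1

set_option maxHeartbeats 1000000 in
open Classical in
theorem stmt14 {V : Type*} [Fintype V] [DecidableEq V] (E : Finset (V × V))
    (hV : 4 ≤ Fintype.card V)
    (ε : ℝ) (hε0 : 0 < ε) (hε1 : ε ≤ 1 / (Fintype.card V : ℝ) ^ 5)
    (σ1 σ2 : V → ℝ) (h1 : IsDist σ1) (h2 : IsDist σ2)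
    (ha : ∀ v : V,
      (1 - (1 - (1 - σ1 v) * (1 - σ2 v)))
          * ((Fintype.card V : ℝ) / ((Fintype.card V : ℝ) - 2)) ≤ 1 + 2 * ε)
    (hb : ∀ e ∈ E,
      (1 - σ1 e.1 - σ1 e.2)
          * ((Fintype.card V : ℝ) / ((Fintype.card V : ℝ) - 2)) ≤ 1 + 2 * ε) :
    (((Finset.univ.filter (fun v : V =>
          2 / (Fintype.card V : ℝ) - 2 * ε - 4 / (Fintype.card V : ℝ) ^ 3 ≤ σ1 v)).card : ℝ)
        ≤ (Fintype.card V : ℝ) / 2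
      ∧ ∀ e ∈ E,
          e.1 ∈ Finset.univ.filter (fun v : V =>
              2 / (Fintype.card V : ℝ) - 2 * ε - 4 / (Fintype.card V : ℝ) ^ 3 ≤ σ1 v)
          ∨ e.2 ∈ Finset.univ.filter (fun v : V =>
              2 / (Fintype.card V : ℝ) - 2 * ε - 4 / (Fintype.card V : ℝ) ^ 3 ≤ σ1 v))
    ∧ ∃ S' : Finset V, ((S'.card : ℝ) ≤ (Fintype.card V : ℝ) / 2
        ∧ ∀ e ∈ E, e.1 ∈ S' ∨ e.2 ∈ S') := by
  classical
  obtain ⟨h1n, h1s⟩ := h1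
  obtain ⟨h2n, h2s⟩ := h2
  set n : ℝ := (Fintype.card V : ℝ) with hndef
  have hn4 : (4:ℝ) ≤ n := by rw [hndef]; exact_mod_cast hV
  have hn0 : (0:ℝ) < n := by linarith
  have hn2 : (0:ℝ) < n - 2 := by linarith
  have h5 : ε * n ^ 5 ≤ 1 := by
    have := (le_div_iff₀ (pow_pos hn0 5)).mp hε1
    linarith
  have hnsq : (16:ℝ) ≤ n^2 := by nlinarith
  have hn4p : (256:ℝ) ≤ n^4 := by nlinarith [hnsq]
  have hεn : ε * n ≤ 1 / 256 := by
    nlinarith [h5, mul_pos hε0 hn0, hn4p]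
  have hεn3 : ε * n ^ 3 ≤ 1 / 16 := by
    nlinarith [h5, mul_pos hε0 (pow_pos hn0 3), hnsq]
  have hεn4 : ε * n ^ 4 ≤ 1 / 4 := by
    nlinarith [h5, mul_pos hε0 (pow_pos hn0 4)]
  -- per-vertex inequality, denominators cleared
  have hA : ∀ v, 2 - 2*ε*n + 4*ε ≤ (σ1 v + σ2 v - σ1 v * σ2 v) * n := by
    intro v
    have h0 := ha v
    rw [mul_div_assoc', div_le_iff₀ hn2] at h0
    nlinarith [h0]
  -- sum bound
  have hsum : ∑ v, σ1 v * σ2 v ≤ 2*ε*n := by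
    have hs : ∑ v : V, (2 - 2*ε*n + 4*ε) ≤ ∑ v, (σ1 v + σ2 v - σ1 v * σ2 v) * n :=
      Finset.sum_le_sum (fun v _ => hA v)
    rw [Finset.sum_const, Finset.card_univ, nsmul_eq_mul, ← hndef] at hs
    have heq : ∑ v, (σ1 v + σ2 v - σ1 v * σ2 v) * n
        = (1 + 1 - ∑ v, σ1 v * σ2 v) * n := by
      rw [← Finset.sum_mul, Finset.sum_sub_distrib, Finset.sum_add_distrib, h1s, h2s]
    rw [heq] at hs
    nlinarith [hs, hε0]
  have hpos : ε < 1/n := by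
    rw [lt_div_iff₀ hn0]; linarith [hεn]
  -- key: a vertex with σ1 ≥ 1/n - ε is in the cover set
  have hkey : ∀ v, 1/n - ε ≤ σ1 v → 2/n - 2*ε - 4/n^3 ≤ σ1 v := by
    intro v hv
    have hp : σ1 v * σ2 v ≤ 2*ε*n := by
      refine le_trans ?_ hsum
      exact Finset.single_le_sum (fun i _ => mul_nonneg (h1n i) (h2n i)) (Finset.mem_univ v)
    have hσ2 : σ2 v ≤ 4/n^3 := by
      by_contra hcon
      push_neg at hcon
      have harith : 2*ε*n < (1/n - ε) * (4/n^3) := by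
        rw [div_sub' hn0.ne', div_mul_div_comm, lt_div_iff₀ (by positivity)]
        nlinarith [h5, hεn]
      have hm1 : (1/n - ε) * σ2 v ≤ σ1 v * σ2 v :=
        mul_le_mul_of_nonneg_right hv (h2n v)
      have hm2 : (1/n - ε) * (4/n^3) < (1/n - ε) * σ2 v :=
        mul_lt_mul_of_pos_left hcon (by linarith)
      linarith
    have hAv := hA v
    have hs12 : 2/n - 2*ε ≤ σ1 v + σ2 v := by
      rw [sub_le_iff_le_add, div_le_iff₀ hn0]
      nlinarith [hAv, mul_nonneg (mul_nonneg (h1n v) (h2n v)) hn0.le, hε0]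
    linarith
  -- threshold times (n+1) exceeds 2
  have hthr : 2 < (n + 1) * (2/n - 2*ε - 4/n^3) := by
    have hq : (2/n - 2*ε - 4/n^3) * n^3 = 2*n^2 - 2*ε*n^3 - 4 := by
      field_simp
    have hthr' : 2*n^3 < (n+1) * (2*n^2 - 2*ε*n^3 - 4) := by
      have hexp : (n+1) * (2*n^2 - 2*ε*n^3 - 4)
          = 2*n^3 + (2*n^2 - 2*(ε*n^4) - 2*(ε*n^3) - 4*n - 4) := by ring
      rw [hexp]
      linarith [hεn3, hεn4, sq_nonneg (n - 4), hn4]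
    have hmm : 2 * n^3 < ((n + 1) * (2/n - 2*ε - 4/n^3)) * n^3 := by
      calc 2*n^3 < (n+1) * (2*n^2 - 2*ε*n^3 - 4) := hthr'
        _ = (n+1) * ((2/n - 2*ε - 4/n^3) * n^3) := by rw [hq]
        _ = ((n+1) * (2/n - 2*ε - 4/n^3)) * n^3 := by ring
    exact lt_of_mul_lt_mul_right hmm (pow_pos hn0 3).le
  have hthr0 : 0 < 2/n - 2*ε - 4/n^3 := by
    by_contra hc
    push_neg at hc
    have := mul_nonpos_of_nonneg_of_nonpos (by linarith : (0:ℝ) ≤ n + 1) hc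
    linarith
  set t : ℝ := 2/n - 2*ε - 4/n^3 with ht
  set S : Finset V := Finset.univ.filter (fun v : V => t ≤ σ1 v) with hS
  -- card bound
  have hcardS : (S.card : ℝ) ≤ n / 2 := by
    have hsum1 : (S.card : ℝ) * t ≤ 1 := by
      have ha1 : S.card • t ≤ ∑ v ∈ S, σ1 v :=
        Finset.card_nsmul_le_sum S σ1 t (fun x hx => (Finset.mem_filter.mp hx).2)
      have ha2 : ∑ v ∈ S, σ1 v ≤ 1 := by
        rw [← h1s]
        exact Finset.sum_le_sum_of_subset_of_nonneg (Finset.subset_univ S)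
          (fun i _ _ => h1n i)
      rw [nsmul_eq_mul] at ha1
      linarith
    have hlt : 2 * (S.card : ℝ) < n + 1 := by
      nlinarith [hsum1, hthr, hthr0, show (0:ℝ) ≤ (S.card:ℝ) from Nat.cast_nonneg _]
    have hnat : 2 * S.card < Fintype.card V + 1 := by
      have : ((2 * S.card : ℕ) : ℝ) < ((Fintype.card V + 1 : ℕ) : ℝ) := by
        push_cast
        rw [← hndef]
        linarith
      exact_mod_cast this
    have hle2 : 2 * S.card ≤ Fintype.card V := by omega
    have : ((2 * S.card : ℕ) : ℝ) ≤ n := by rw [hndef]; exact_mod_cast hle2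
    push_cast at this
    linarith
  -- cover
  have hcover : ∀ e ∈ E, e.1 ∈ S ∨ e.2 ∈ S := by
    intro e he
    have h0 := hb e he
    rw [mul_div_assoc', div_le_iff₀ hn2] at h0
    have hsum2 : 2/n - 2*ε ≤ σ1 e.1 + σ1 e.2 := by
      rw [sub_le_iff_le_add, div_le_iff₀ hn0]
      nlinarith [h0, hε0]
    rcases le_total (σ1 e.1) (σ1 e.2) with hle | hle
    · right
      rw [hS, Finset.mem_filter]
      refine ⟨Finset.mem_univ _, hkey _ ?_⟩
      have hhalf : 1/n + 1/n = 2/n := by ring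
      linarith
    · left
      rw [hS, Finset.mem_filter]
      refine ⟨Finset.mem_univ _, hkey _ ?_⟩
      have hhalf : 1/n + 1/n = 2/n := by ring
      linarith
  exact ⟨⟨hcardS, hcover⟩, S, hcardS, hcover⟩
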